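/- Quantum Union Bound: Let ρ be a density matrix on ℂ^d, let ε ≥ 0, and let Λ₁, …, Λ_T be POVM elements on ℂ^d such that tr(Λ_t ρ) ≤ ε for every t ∈ {1,…,T}. For each t set B_t := √(1 − Λ_t) (a Hermitian matrix). If the measurements are applied in sequence to ρ, the probability that all T outcomes are 0 equals tr(B_T ⋯ B_2 B_1 ρ B_1 B_2 ⋯ B_T); this quantity is at least 1 − T·√ε. Equivalently, the probability that at least one of the T sequential measurements yields outcome 1 is at most T·√ε. -/

import Mathlib

open Matrix BigOperators ComplexOrder

/-- The square root of a positive semidefinite matrix, as defined in the older Mathlib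
(`Matrix.PosSemidef.sqrt`, since removed). -/
noncomputable def Matrix.PosSemidef.sqrt {n 𝕜 : Type*} [Fintype n] [RCLike 𝕜] [DecidableEq n]
    {A : Matrix n n 𝕜} (hA : A.PosSemidef) : Matrix n n 𝕜 :=
  hA.1.eigenvectorUnitary.1 * diagonal ((↑) ∘ (√·) ∘ hA.1.eigenvalues) *
    (star hA.1.eigenvectorUnitary : Matrix n n 𝕜)

lemma Matrix.PosSemidef.posSemidef_sqrt {n 𝕜 : Type*} [Fintype n] [RCLike 𝕜] [DecidableEq n]
    {A : Matrix n n 𝕜} (hA : A.PosSemidef) : hA.sqrt.PosSemidef := by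
  have hd : (diagonal ((↑) ∘ (√·) ∘ hA.1.eigenvalues) : Matrix n n 𝕜).PosSemidef :=
    posSemidef_diagonal_iff.mpr (fun i => RCLike.ofReal_nonneg.mpr (Real.sqrt_nonneg _))
  exact hd.mul_mul_conjTranspose_same (hA.1.eigenvectorUnitary : Matrix n n 𝕜)

lemma Matrix.PosSemidef.sqrt_mul_self {n 𝕜 : Type*} [Fintype n] [RCLike 𝕜] [DecidableEq n]
    {A : Matrix n n 𝕜} (hA : A.PosSemidef) : hA.sqrt * hA.sqrt = A := by
  have hUU : (star hA.1.eigenvectorUnitary : Matrix n n 𝕜) * hA.1.eigenvectorUnitary.1 = 1 :=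
    Unitary.coe_star_mul_self _
  conv_rhs => rw [hA.1.spectral_theorem, Unitary.conjStarAlgAut_apply]
  unfold Matrix.PosSemidef.sqrt
  calc _ = hA.1.eigenvectorUnitary.1 * (diagonal ((↑) ∘ (√·) ∘ hA.1.eigenvalues) *
        ((star hA.1.eigenvectorUnitary : Matrix n n 𝕜) * hA.1.eigenvectorUnitary.1) *
        diagonal ((↑) ∘ (√·) ∘ hA.1.eigenvalues)) *
        (star hA.1.eigenvectorUnitary : Matrix n n 𝕜) := by simp only [Matrix.mul_assoc]
    _ = _ := by
      rw [hUU, Matrix.mul_one, diagonal_mul_diagonal]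
      congr 3
      funext i
      simp only [Function.comp_apply, ← RCLike.ofReal_mul, Real.mul_self_sqrt (hA.eigenvalues_nonneg i)]

section Helpers

variable {n : Type*} [Fintype n] [DecidableEq n]

private lemma psd_diag_re_nonneg {A : Matrix n n ℂ} (hA : A.PosSemidef) (i : n) : 0 ≤ (A i i).re := by
  have h := hA.re_dotProduct_nonneg (Pi.single i 1)
  simpa [dotProduct, mulVec, Pi.single_apply] using h


private lemma psd_trace_re_nonneg {A : Matrix n n ℂ} (hA : A.PosSemidef) : 0 ≤ A.trace.re := by
  rw [Matrix.trace, Complex.re_sum]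
  exact Finset.sum_nonneg fun i _ => psd_diag_re_nonneg hA i


private lemma trace_conjTranspose_mul_self_re_nonneg (A : Matrix n n ℂ) :
    0 ≤ (trace (Aᴴ * A)).re :=
  psd_trace_re_nonneg (posSemidef_conjTranspose_mul_self A)


private lemma trace_mul_psd_re_nonneg {P Q : Matrix n n ℂ} (hP : P.PosSemidef) (hQ : Q.PosSemidef) :
    0 ≤ (trace (P * Q)).re := by
  have h1 : P * Q = hP.sqrt * (hP.sqrt * hQ.sqrt * hQ.sqrt) := by
    rw [← mul_assoc, ← mul_assoc, hP.sqrt_mul_self, mul_assoc, hQ.sqrt_mul_self]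
  have h2 : trace (P * Q) = trace ((hQ.sqrt * hP.sqrt)ᴴ * (hQ.sqrt * hP.sqrt)) := by
    rw [h1, trace_mul_comm, conjTranspose_mul, hP.posSemidef_sqrt.isHermitian.eq,
      hQ.posSemidef_sqrt.isHermitian.eq]
    rw [Matrix.mul_assoc, Matrix.mul_assoc]
  rw [h2]
  exact trace_conjTranspose_mul_self_re_nonneg _

private lemma weighted_cs (A B : Matrix n n ℂ) {l : ℝ} (hl : 0 < l) :
    2 * (trace (Aᴴ * B)).re ≤ l * (trace (Aᴴ * A)).re + l⁻¹ * (trace (Bᴴ * B)).re := by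
  set c : ℂ := (Real.sqrt l : ℂ) with hc
  have hc0 : c ≠ 0 := by
    simp [hc, Complex.ofReal_ne_zero, Real.sqrt_ne_zero'.2 hl]
  have hcc : c * c = (l : ℂ) := by
    rw [hc, ← Complex.ofReal_mul, Real.mul_self_sqrt hl.le]
  have hstar : star c = c := by simp [hc]
  have key := trace_conjTranspose_mul_self_re_nonneg (c • A - c⁻¹ • B)
  have expand : (c • A - c⁻¹ • B)ᴴ * (c • A - c⁻¹ • B)
      = (c*c) • (Aᴴ * A) + (c⁻¹ * c⁻¹) • (Bᴴ * B) - (Aᴴ * B + Bᴴ * A) := by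
    rw [conjTranspose_sub, conjTranspose_smul, conjTranspose_smul, hstar, star_inv₀, hstar]
    rw [sub_mul, mul_sub, mul_sub]
    simp only [smul_mul_assoc, mul_smul_comm, smul_smul]
    rw [inv_mul_cancel₀ hc0, mul_inv_cancel₀ hc0]
    simp only [one_smul]
    abel
  rw [expand] at key
  have htr : trace ((c*c) • (Aᴴ * A) + (c⁻¹ * c⁻¹) • (Bᴴ * B) - (Aᴴ * B + Bᴴ * A))
      = (c*c) * trace (Aᴴ * A) + (c⁻¹*c⁻¹) * trace (Bᴴ * B)
        - (trace (Aᴴ * B) + trace (Bᴴ * A)) := by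
    simp [trace_sub, trace_add, trace_smul, smul_eq_mul]
  rw [htr] at key
  have hBA : trace (Bᴴ * A) = star (trace (Aᴴ * B)) := by
    rw [← trace_conjTranspose, conjTranspose_mul, conjTranspose_conjTranspose]
  have hcc' : (c⁻¹ * c⁻¹ : ℂ) = ((l⁻¹ : ℝ) : ℂ) := by
    rw [← mul_inv, hcc]; push_cast; ring
  rw [hBA, hcc, hcc'] at key
  have : 0 ≤ l * (trace (Aᴴ * A)).re + l⁻¹ * (trace (Bᴴ * B)).re
      - 2 * (trace (Aᴴ * B)).re := by
    have := key
    simp only [Complex.sub_re, Complex.add_re, Complex.re_ofReal_mul, Complex.add_re,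
      Complex.conj_re] at this
    convert this using 1
    simp [Complex.add_re, RCLike.star_def, Complex.conj_re]
    ring
  linarith

private lemma eigenvalues_le_one {A : Matrix n n ℂ} (hA : A.IsHermitian)
    (h1 : (1 - A).PosSemidef) (i : n) : hA.eigenvalues i ≤ 1 := by
  have hv := hA.eigenvalues_eq i
  set v := ⇑(hA.eigenvectorBasis i) with hvdef
  have hnorm : ‖hA.eigenvectorBasis i‖ = 1 := hA.eigenvectorBasis.orthonormal.1 i
  have hvv : RCLike.re (dotProduct (star v) v) = 1 := by
    have h : (dotProduct (star v) v) = (inner ℂ (hA.eigenvectorBasis i) (hA.eigenvectorBasis i) : ℂ) := by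
      rw [EuclideanSpace.inner_eq_star_dotProduct, dotProduct_comm]
    rw [h, inner_self_eq_norm_sq_to_K, hnorm]
    norm_num
  have h2 := h1.re_dotProduct_nonneg v
  rw [sub_mulVec, one_mulVec, dotProduct_sub, map_sub] at h2
  rw [hv]
  linarith

private lemma sqrt_facts {Λ : Matrix n n ℂ} (hΛ : Λ.PosSemidef) (hΛ1 : (1 - Λ).PosSemidef) :
    (1 - hΛ1.sqrt).PosSemidef ∧ (hΛ1.sqrt - hΛ1.sqrt * hΛ1.sqrt).PosSemidef := by
  set U : Matrix n n ℂ := (hΛ1.1.eigenvectorUnitary : Matrix n n ℂ) with hU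
  set μ : n → ℝ := hΛ1.1.eigenvalues with hμ
  set F : n → ℂ := (↑) ∘ Real.sqrt ∘ μ with hF
  have hFi : ∀ i, F i = ((Real.sqrt (μ i) : ℝ) : ℂ) := fun i => rfl
  have hμ0 : ∀ i, 0 ≤ μ i := hΛ1.eigenvalues_nonneg
  have hμ1 : ∀ i, μ i ≤ 1 := eigenvalues_le_one hΛ1.1 (by simpa using hΛ)
  have hUU : U * star U = 1 := mem_unitaryGroup_iff.mp hΛ1.1.eigenvectorUnitary.2
  have hUU' : star U * U = 1 := mem_unitaryGroup_iff'.mp hΛ1.1.eigenvectorUnitary.2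
  have hB : hΛ1.sqrt = U * diagonal F * star U := rfl
  have key : ∀ g : n → ℂ, (∀ i, 0 ≤ g i) →
      (U * diagonal g * star U).PosSemidef := by
    intro g hg
    have hd : (diagonal g).PosSemidef := posSemidef_diagonal_iff.mpr hg
    have := hd.mul_mul_conjTranspose_same U
    rw [star_eq_conjTranspose]
    exact this
  constructor
  · have hd : (diagonal (fun i => 1 - F i) : Matrix n n ℂ) = 1 - diagonal F := by
      rw [← diagonal_one, diagonal_sub]
    have h1 : 1 - hΛ1.sqrt = U * diagonal (fun i => 1 - F i) * star U := by
      rw [hd, mul_sub, sub_mul, mul_one, hUU, hB]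
    rw [h1]
    refine key _ fun i => ?_
    have h2 : ((1 - Real.sqrt (μ i) : ℝ) : ℂ) = 1 - F i := by
      rw [hFi]; push_cast; ring
    rw [← h2, Complex.zero_le_real]
    have := Real.sqrt_le_one.mpr (hμ1 i)
    linarith
  · have hsq : hΛ1.sqrt * hΛ1.sqrt = U * diagonal (fun i => F i * F i) * star U := by
      rw [hB]
      rw [show U * diagonal F * star U * (U * diagonal F * star U)
          = U * (diagonal F * (star U * U) * diagonal F) * star U by
            simp only [Matrix.mul_assoc]]
      rw [hUU', mul_one, diagonal_mul_diagonal]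
    have hd : (diagonal (fun i => F i - F i * F i) : Matrix n n ℂ)
        = diagonal F - diagonal (fun i => F i * F i) := by rw [diagonal_sub]
    have h2 : hΛ1.sqrt - hΛ1.sqrt * hΛ1.sqrt
        = U * diagonal (fun i => F i - F i * F i) * star U := by
      rw [hd, mul_sub, sub_mul, hsq, hB]
    rw [h2]
    refine key _ fun i => ?_
    have h3 : ((Real.sqrt (μ i) - Real.sqrt (μ i) * Real.sqrt (μ i) : ℝ) : ℂ)
        = F i - F i * F i := by rw [hFi]; push_cast; ring
    rw [← h3, Complex.zero_le_real]
    nlinarith [Real.sqrt_le_one.mpr (hμ1 i), Real.sqrt_nonneg (μ i)]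

end Helpers

set_option maxHeartbeats 2000000 in
/-- **Quantum Union Bound.**
Let `ρ` be a density matrix on `ℂ^d` and `Λ 0, …, Λ (T-1)` POVM elements, each
accepting `ρ` with probability at most `ε`.  Let `B t := √(1 - Λ t)` and let
`σ t` be the (unnormalized) state after applying the first `t` measurements in
sequence, i.e. `σ 0 = ρ` and `σ (t+1) = B t * σ t * B t`.  Then the probability
`tr (σ T)` that all `T` outcomes are `0` is at least `1 - T·√ε`; equivalently,
the probability that at least one measurement yields outcome `1` is at most `T·√ε`. -/
theorem quantum_union_bound {d T : ℕ}
    (ρ : Matrix (Fin d) (Fin d) ℂ)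
    (hρ : ρ.PosSemidef) (hρtr : ρ.trace = 1)
    (ε : ℝ) (hε : 0 ≤ ε)
    (Λ : Fin T → Matrix (Fin d) (Fin d) ℂ)
    (hΛ : ∀ t, (Λ t).PosSemidef)
    (hΛ1 : ∀ t, (1 - Λ t).PosSemidef)
    (hprob : ∀ t, (Λ t * ρ).trace.re ≤ ε)
    (σ : ℕ → Matrix (Fin d) (Fin d) ℂ)
    (hσ0 : σ 0 = ρ)
    (hσs : ∀ t : Fin T, σ ((t : ℕ) + 1) = (hΛ1 t).sqrt * σ (t : ℕ) * (hΛ1 t).sqrt) :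
    1 - (T : ℝ) * Real.sqrt ε ≤ (σ T).trace.re := by
  classical
  -- the square root of ρ
  set R : Matrix (Fin d) (Fin d) ℂ := hρ.sqrt with hRdef
  have hRH : Rᴴ = R := hρ.posSemidef_sqrt.1
  have hRR : R * R = ρ := hρ.sqrt_mul_self
  -- extended measurement operators
  obtain ⟨B', hB'⟩ : ∃ B' : ℕ → Matrix (Fin d) (Fin d) ℂ,
      ∀ (t : ℕ) (h : t < T), B' t = (hΛ1 ⟨t, h⟩).sqrt :=
    ⟨fun t => if h : t < T then (hΛ1 ⟨t, h⟩).sqrt else 1, fun t h => dif_pos h⟩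
  -- accumulated product
  obtain ⟨C, hC0, hCs⟩ : ∃ C : ℕ → Matrix (Fin d) (Fin d) ℂ,
      C 0 = 1 ∧ ∀ k, C (k+1) = B' k * C k :=
    ⟨fun t => Nat.rec 1 (fun k Ck => B' k * Ck) t, rfl, fun k => rfl⟩
  -- σ t = C t * ρ * (C t)ᴴ for t ≤ T
  have F1 : ∀ t, t ≤ T → σ t = C t * ρ * (C t)ᴴ := by
    intro t
    induction t with
    | zero => intro _; simp [hC0, hσ0]
    | succ t ih =>
      intro ht
      have h : t < T := ht
      have hBt := hB' t h
      have hBH : (B' t)ᴴ = B' t := by rw [hBt]; exact (hΛ1 ⟨t, h⟩).posSemidef_sqrt.1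
      have hst := hσs ⟨t, h⟩
      simp only [Fin.val_mk] at hst  -- coercion of ⟨t,h⟩ is t
      rw [hst, ih h.le, hCs, ← hBt, conjTranspose_mul, hBH]
      simp only [Matrix.mul_assoc]
  have hσpsd : ∀ t, t ≤ T → (σ t).PosSemidef := by
    intro t ht
    rw [F1 t ht]
    exact hρ.mul_mul_conjTranspose_same (C t)
  -- real sequences
  set s : ℕ → ℝ := fun t => (σ t).trace.re with hsdef
  set f : ℕ → ℝ := fun t => ((C t * ρ).trace).re with hfdef
  have hs0 : s 0 = 1 := by simp [hsdef, hσ0, hρtr]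
  have hf0 : f 0 = 1 := by simp [hfdef, hC0, hρtr]
  -- trace loss at each step
  have F3 : ∀ (t : ℕ) (h : t < T), s (t+1) = s t - ((Λ ⟨t, h⟩ * σ t).trace).re := by
    intro t h
    have hst := hσs ⟨t, h⟩
    simp only [Fin.val_mk] at hst
    have hBB : (hΛ1 ⟨t, h⟩).sqrt * (hΛ1 ⟨t, h⟩).sqrt = 1 - Λ ⟨t, h⟩ :=
      (hΛ1 ⟨t, h⟩).sqrt_mul_self
    have : trace (σ (t+1)) = trace ((1 - Λ ⟨t, h⟩) * σ t) := by
      rw [hst, trace_mul_comm, ← Matrix.mul_assoc, hBB]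
    rw [hsdef]
    simp only
    rw [this, sub_mul, one_mul, trace_sub, Complex.sub_re]
  have F4 : ∀ (t : ℕ) (h : t < T), s (t+1) ≤ s t := by
    intro t h
    rw [F3 t h]
    have := trace_mul_psd_re_nonneg (hΛ ⟨t, h⟩) (hσpsd t h.le)
    linarith
  -- main step inequality
  have F5 : ∀ (l : ℝ), 0 < l → ∀ (t : ℕ) (h : t < T),
      f t - f (t+1) ≤ (l * ε + l⁻¹ * (s t - s (t+1))) / 2 := by
    intro l hl t h
    set t' : Fin T := ⟨t, h⟩ with ht'
    set Bt : Matrix (Fin d) (Fin d) ℂ := (hΛ1 t').sqrt with hBtdef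
    have hBH : Btᴴ = Bt := (hΛ1 t').posSemidef_sqrt.1
    have hBB : Bt * Bt = 1 - Λ t' := (hΛ1 t').sqrt_mul_self
    set D : Matrix (Fin d) (Fin d) ℂ := 1 - Bt with hDdef
    have hD : D.PosSemidef := (sqrt_facts (hΛ t') (hΛ1 t')).1
    have hΛD : (Λ t' - D).PosSemidef := by
      have h1 : Λ t' - D = Bt - Bt * Bt := by rw [hBB, hDdef]; abel
      rw [h1]
      exact (sqrt_facts (hΛ t') (hΛ1 t')).2
    set E : Matrix (Fin d) (Fin d) ℂ := hD.sqrt with hEdef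
    have hEH : Eᴴ = E := hD.posSemidef_sqrt.1
    have hEE : E * E = D := hD.sqrt_mul_self
    -- f t - f (t+1) = re tr (D * (C t * ρ))
    have step1 : f t - f (t+1) = (trace (D * (C t * ρ))).re := by
      have hc : C (t+1) = Bt * C t := by rw [hCs, hB' t h]
      have hDC : D * (C t * ρ) = C t * ρ - Bt * C t * ρ := by
        rw [hDdef, sub_mul, one_mul, Matrix.mul_assoc]
      rw [hfdef]
      simp only
      rw [hDC, trace_sub, Complex.sub_re, hc, Matrix.mul_assoc]
    -- the two Cauchy-Schwarz traces
    have claim1 : trace ((E * R)ᴴ * (E * (C t * R))) = trace (D * (C t * ρ)) := by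
      have hXc : (E * R)ᴴ = R * E := by rw [conjTranspose_mul, hEH, hRH]
      rw [hXc]
      have m1 : (R * E) * (E * (C t * R)) = R * (D * (C t * R)) := by
        rw [← hEE]; simp only [Matrix.mul_assoc]
      rw [m1, trace_mul_comm]
      congr 1
      rw [← hRR]; simp only [Matrix.mul_assoc]
    have claim2 : trace ((E * R)ᴴ * (E * R)) = trace (D * ρ) := by
      have hXc : (E * R)ᴴ = R * E := by rw [conjTranspose_mul, hEH, hRH]
      rw [hXc]
      have m1 : (R * E) * (E * R) = R * (D * R) := by
        rw [← hEE]; simp only [Matrix.mul_assoc]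
      rw [m1, trace_mul_comm]
      congr 1
      rw [← hRR]; simp only [Matrix.mul_assoc]
    have claim3 : trace ((E * (C t * R))ᴴ * (E * (C t * R))) = trace (D * σ t) := by
      have hYc : (E * (C t * R))ᴴ = R * (C t)ᴴ * E := by
        rw [conjTranspose_mul, conjTranspose_mul, hEH, hRH, Matrix.mul_assoc]
      rw [hYc]
      have m1 : (R * (C t)ᴴ * E) * (E * (C t * R)) = R * ((C t)ᴴ * (D * (C t * R))) := by
        rw [← hEE]; simp only [Matrix.mul_assoc]
      rw [m1, trace_mul_comm]
      have m2 : (C t)ᴴ * (D * (C t * R)) * R = (C t)ᴴ * (D * (C t * ρ)) := by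
        rw [← hRR]; simp only [Matrix.mul_assoc]
      rw [m2, trace_mul_comm, F1 t h.le]
      simp only [Matrix.mul_assoc]
    -- bounds on the two traces
    have bound2 : (trace (D * ρ)).re ≤ ε := by
      have h1 := trace_mul_psd_re_nonneg hΛD hρ
      have h2 : trace ((Λ t' - D) * ρ) = trace (Λ t' * ρ) - trace (D * ρ) := by
        rw [sub_mul, trace_sub]
      rw [h2, Complex.sub_re] at h1
      have := hprob t'
      linarith
    have bound3 : (trace (D * σ t)).re ≤ s t - s (t+1) := by
      have h1 := trace_mul_psd_re_nonneg hΛD (hσpsd t h.le)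
      have h2 : trace ((Λ t' - D) * σ t) = trace (Λ t' * σ t) - trace (D * σ t) := by
        rw [sub_mul, trace_sub]
      rw [h2, Complex.sub_re] at h1
      have h3 := F3 t h
      rw [ht'] at *
      linarith [h1, h3]
    have hcs := weighted_cs (E * R) (E * (C t * R)) hl
    rw [claim1, claim2, claim3] at hcs
    have hlinv : (0:ℝ) ≤ l⁻¹ := (inv_pos.mpr hl).le
    have := mul_le_mul_of_nonneg_left bound3 hlinv
    have := mul_le_mul_of_nonneg_left bound2 hl.le
    rw [step1]
    linarith
  -- telescoping
  have F6 : ∀ (l : ℝ), 0 < l → ∀ k, k ≤ T →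
      1 - f k ≤ (l * ((k:ℝ) * ε) + l⁻¹ * (1 - s k)) / 2 := by
    intro l hl k
    induction k with
    | zero =>
      intro _
      rw [hf0, hs0]
      simp
    | succ k ih =>
      intro hk
      have hkT : k < T := hk
      have h1 := ih hkT.le
      have h2 := F5 l hl k hkT
      push_cast
      push_cast at h1 h2 ⊢
      linarith
  -- f T ≤ √(s T)
  have F8 : 0 ≤ s T := psd_trace_re_nonneg (hσpsd T le_rfl)
  have F9 : ∀ k, k ≤ T → s k ≤ 1 := by
    intro k
    induction k with
    | zero => intro _; rw [hs0]
    | succ k ih =>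
      intro hk
      have hkT : k < T := hk
      exact le_trans (F4 k hkT) (ih hkT.le)
  have F7 : ∀ (l : ℝ), 0 < l → 2 * f T ≤ l + l⁻¹ * s T := by
    intro l hl
    have hcs := weighted_cs R (C T * R) hl
    have c1 : trace (Rᴴ * (C T * R)) = trace (C T * ρ) := by
      rw [hRH, trace_mul_comm]
      congr 1
      rw [← hRR]; simp only [Matrix.mul_assoc]
    have c2 : trace (Rᴴ * R) = trace ρ := by rw [hRH, hRR]
    have c3 : trace ((C T * R)ᴴ * (C T * R)) = trace (σ T) := by
      rw [conjTranspose_mul, hRH, trace_mul_comm, F1 T le_rfl]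
      have : C T * R * (R * (C T)ᴴ) = C T * ρ * (C T)ᴴ := by
        rw [← hRR]; simp only [Matrix.mul_assoc]
      rw [← this]
    rw [c1, c2, c3, hρtr] at hcs
    simpa using hcs
  have F10 : f T ≤ Real.sqrt (s T) := by
    rcases eq_or_lt_of_le F8 with h0 | h0
    · -- s T = 0
      by_contra hcon
      push_neg at hcon
      have hfpos : 0 < f T := lt_of_le_of_lt (Real.sqrt_nonneg _) hcon
      have := F7 (f T) hfpos
      rw [← h0] at this
      simp at this
      linarith
    · have hl : 0 < Real.sqrt (s T) := Real.sqrt_pos.mpr h0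
      have hF7 := F7 _ hl
      have h2 : Real.sqrt (s T) * Real.sqrt (s T) = s T := Real.mul_self_sqrt F8
      have hss : (Real.sqrt (s T))⁻¹ * s T = Real.sqrt (s T) := by
        rw [inv_mul_eq_div, div_eq_iff hl.ne']
        exact h2.symm
      rw [hss] at hF7
      linarith
  -- endgame
  show 1 - (T:ℝ) * Real.sqrt ε ≤ s T
  have hsqε : 0 ≤ Real.sqrt ε := Real.sqrt_nonneg ε
  rcases Nat.eq_zero_or_pos T with hT0 | hTpos
  · subst hT0
    rw [hs0]
    simp
  rcases eq_or_lt_of_le (Nat.one_le_iff_ne_zero.mpr hTpos.ne') with hT1 | hT2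
  · -- T = 1
    have hT1' : T = 1 := hT1.symm
    subst hT1'
    have h3 := F3 0 (by norm_num)
    simp only [Fin.zero_eta, zero_add] at h3
    have htr1 : ((Λ 0 * ρ).trace).re ≤ ε := hprob 0
    have h1 := trace_mul_psd_re_nonneg (hΛ1 0) hρ
    have h2 : trace ((1 - Λ 0) * ρ) = trace ρ - trace (Λ 0 * ρ) := by
      rw [sub_mul, one_mul, trace_sub]
    rw [h2, hρtr, Complex.sub_re, Complex.one_re] at h1
    have hmin : ((Λ 0 * ρ).trace).re ≤ Real.sqrt ε := by
      rcases le_or_gt ε 1 with hε1 | hε1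
      · have : ε ≤ Real.sqrt ε := by
          nlinarith [Real.sq_sqrt hε, Real.sqrt_nonneg ε]
        linarith
      · have : (1:ℝ) ≤ Real.sqrt ε := by
          nlinarith [Real.sq_sqrt hε, Real.sqrt_nonneg ε]
        linarith
    rw [h3, hs0, hσ0]
    push_cast
    linarith
  -- T ≥ 2
  have hT2' : (2:ℝ) ≤ (T:ℝ) := by exact_mod_cast hT2
  rcases le_or_gt 1 ((T:ℝ) * Real.sqrt ε) with hbig | hsmall
  · linarith
  set L : ℝ := 1 - s T with hLdef
  have hL1 : L ≤ 1 := by have := F8; simp [hLdef]; linarith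
  rcases le_or_gt L 0 with hL0 | hL0
  · have hTs : 0 ≤ (T:ℝ) * Real.sqrt ε := by positivity
    simp only [hLdef] at hL0
    linarith
  -- L > 0
  have hsε1 : Real.sqrt ε < 1 := by
    nlinarith
  have hε1 : ε < 1 := by nlinarith [Real.sq_sqrt hε, Real.sqrt_nonneg ε]
  have hTεlt : (T:ℝ) * ε < 1 := by
    have h1 : (T:ℝ) * ε = ((T:ℝ) * Real.sqrt ε) * Real.sqrt ε := by
      rw [mul_assoc, Real.mul_self_sqrt hε]
    rw [h1]
    nlinarith
  rcases eq_or_lt_of_le hε with hε0 | hεpos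
  · -- ε = 0 : show contradiction with L > 0
    exfalso
    have hsT1 : s T < 1 := by simp only [hLdef] at hL0; linarith
    have hδ : 0 < 1 - Real.sqrt (s T) := by
      have : Real.sqrt (s T) < 1 := by
        rw [show (1:ℝ) = Real.sqrt 1 by simp]
        exact Real.sqrt_lt_sqrt F8 hsT1
      linarith
    set δ := 1 - Real.sqrt (s T) with hδdef
    have hl : 0 < L / δ := div_pos hL0 hδ
    have h6 := F6 (L / δ) hl T le_rfl
    have h10 := F10
    rw [← hε0] at h6
    have hinv : (L / δ)⁻¹ * (1 - s T) = δ := by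
      rw [inv_div, ← hLdef]
      field_simp
    rw [hinv] at h6
    simp at h6
    -- h6 : 1 - f T ≤ δ / 2
    have : δ ≤ 1 - f T := by
      simp only [hδdef]
      linarith
    linarith
  -- ε > 0
  have hTεpos : 0 < (T:ℝ) * ε := by positivity
  set l : ℝ := Real.sqrt (L / ((T:ℝ) * ε)) with hldef
  have hl : 0 < l := Real.sqrt_pos.mpr (div_pos hL0 hTεpos)
  set r : ℝ := Real.sqrt L * Real.sqrt ((T:ℝ) * ε) with hrdef
  have hr0 : 0 ≤ r := by positivity
  have hla : l * ((T:ℝ) * ε) = r := by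
    rw [hldef, hrdef, Real.sqrt_div hL0.le, div_mul_eq_mul_div, mul_div_assoc, Real.div_sqrt]
  have hinv : l⁻¹ = Real.sqrt (((T:ℝ)*ε) / L) := by
    rw [hldef, ← Real.sqrt_inv, inv_div]
  have hlb : l⁻¹ * L = r := by
    rw [hinv, Real.sqrt_div hTεpos.le, div_mul_eq_mul_div, mul_div_assoc, Real.div_sqrt,
      hrdef, mul_comm]
  have h6 := F6 l hl T le_rfl
  rw [hla] at h6
  rw [← hLdef] at h6
  rw [hlb] at h6
  -- h6 : 1 - f T ≤ (r + r) / 2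
  have h11 : 1 - Real.sqrt (s T) ≤ r := by
    have := F10
    linarith
  have hsL : Real.sqrt L ≤ 1 := Real.sqrt_le_one.mpr hL1
  have hsTε : Real.sqrt ((T:ℝ)*ε) < 1 := by
    rw [show (1:ℝ) = Real.sqrt 1 by simp]
    exact Real.sqrt_lt_sqrt hTεpos.le hTεlt
  have hr1 : r < 1 := by
    rw [hrdef]
    nlinarith [Real.sqrt_nonneg ((T:ℝ)*ε), Real.sqrt_nonneg L]
  have hsq : 1 - r ≤ Real.sqrt (s T) := by linarith
  have h12 : (1 - r) * (1 - r) ≤ s T := by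
    have h := mul_self_le_mul_self (by linarith : (0:ℝ) ≤ 1 - r) hsq
    rwa [Real.mul_self_sqrt F8] at h
  have hrr : r * r = L * ((T:ℝ)*ε) := by
    rw [hrdef, mul_mul_mul_comm, Real.mul_self_sqrt hL0.le, Real.mul_self_sqrt hTεpos.le]
  have hsTL : s T = 1 - L := by rw [hLdef]; ring
  have h13 : L * (1 + (T:ℝ)*ε) ≤ 2 * r := by nlinarith [h12, hrr, hsTL]
  have h14 : (L * (1 + (T:ℝ)*ε))^2 ≤ 4 * (L * ((T:ℝ)*ε)) := by
    nlinarith [h13, hrr, mul_nonneg hL0.le (by positivity : (0:ℝ) ≤ 1 + (T:ℝ)*ε)]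
  have h15 : 4 * Real.sqrt ε ≤ (1 + (T:ℝ)*ε)^2 := by
    nlinarith [sq_nonneg (1 - 2*Real.sqrt ε), Real.mul_self_sqrt hε, hT2', hε,
      mul_le_mul_of_nonneg_right hT2' hε]
  have h16 : 4 * ((T:ℝ)*ε) ≥ L * (1 + (T:ℝ)*ε)^2 := by
    have hL2 : 0 < L := hL0
    nlinarith [h14, hL2]
  have h17 : L * Real.sqrt ε ≤ (T:ℝ) * ε := by nlinarith [h16, h15, hL0.le]
  have hsεpos : 0 < Real.sqrt ε := Real.sqrt_pos.mpr hεpos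
  have hfin : L ≤ (T:ℝ) * Real.sqrt ε := by
    have hTε' : (T:ℝ) * ε = ((T:ℝ) * Real.sqrt ε) * Real.sqrt ε := by
      rw [mul_assoc, Real.mul_self_sqrt hε]
    rw [hTε'] at h17
    exact le_of_mul_le_mul_right (by linarith) hsεpos
  simp only [hLdef] at hfin
  linarith
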